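/- For every integer t ≥ 3, the equitable dominator chromatic number of the line graph of the t-sunlet graph Sl_t equals t + ⌈t/4⌉, i.e., χ_ed(L(Sl_t)) = t + ⌈t/4⌉. -/

import Mathlib

open SimpleGraph

/-- `c` is an equitable dominator coloring of `G` with `n` colors: it is a proper vertex
coloring, every vertex dominates some nonempty color class (each vertex of that class lies in
its closed neighborhood), and any two color classes differ in cardinality by at most 1. -/
def IsEDColoring {V : Type*} (G : SimpleGraph V) {n : ℕ} (c : V → Fin n) : Prop :=
  (∀ ⦃u v : V⦄, G.Adj u v → c u ≠ c v) ∧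
  (∀ v : V, ∃ j : Fin n, (∃ u, c u = j) ∧ ∀ u, c u = j → u = v ∨ G.Adj v u) ∧
  (∀ i j : Fin n, {u | c u = i}.ncard ≤ {u | c u = j}.ncard + 1)

/-- The equitable dominator chromatic number of `G`: the least number of colors admitting an
equitable dominator coloring of `G`. -/
noncomputable def edcn {V : Type*} (G : SimpleGraph V) : ℕ :=
  sInf {n : ℕ | ∃ c : V → Fin n, IsEDColoring G c}
/-- The `t`-sunlet graph `Sl_t`: the cycle `C_t` on the vertices `Sum.inl i`, `i : ZMod t`,
with a pendant vertex `Sum.inr i` attached to each cycle vertex. -/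
def sunlet (t : ℕ) : SimpleGraph (ZMod t ⊕ ZMod t) :=
  SimpleGraph.fromRel (fun x y =>
    (∃ i : ZMod t, x = Sum.inl i ∧ y = Sum.inl (i + 1)) ∨
    (∃ i : ZMod t, x = Sum.inl i ∧ y = Sum.inr i))


lemma isEDColoring_comp {V W : Type*} (G : SimpleGraph V) (G' : SimpleGraph W)
    (φ : V ≃ W) (hφ : ∀ a b, G.Adj a b ↔ G'.Adj (φ a) (φ b)) {n : ℕ} (c : W → Fin n)
    (hc : IsEDColoring G' c) : IsEDColoring G (c ∘ φ) := by
  obtain ⟨h1, h2, h3⟩ := hc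
  refine ⟨fun u v h => h1 ((hφ u v).1 h), fun v => ?_, fun i j => ?_⟩
  · obtain ⟨j, ⟨u, hu⟩, hdom⟩ := h2 (φ v)
    refine ⟨j, ⟨φ.symm u, by simpa using hu⟩, fun w hw => ?_⟩
    rcases hdom (φ w) hw with h | h
    · exact Or.inl (φ.injective h)
    · exact Or.inr ((hφ v w).2 h)
  · have key : ∀ k : Fin n, {u | (c ∘ φ) u = k}.ncard = {u | c u = k}.ncard := by
      intro k
      have : {u | (c ∘ φ) u = k} = φ.symm '' {u | c u = k} := by
        ext u
        simp [Equiv.eq_symm_apply φ |>.symm]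
      rw [this, Set.ncard_image_of_injective _ φ.symm.injective]
    rw [key, key]; exact h3 i j

lemma edcn_eq_of_iso {V W : Type*} (G : SimpleGraph V) (G' : SimpleGraph W)
    (φ : V ≃ W) (hφ : ∀ a b, G.Adj a b ↔ G'.Adj (φ a) (φ b)) : edcn G = edcn G' := by
  unfold edcn
  congr 1
  ext n
  constructor
  · rintro ⟨c, hc⟩
    exact ⟨c ∘ φ.symm, isEDColoring_comp G' G φ.symm
      (fun a b => by rw [hφ (φ.symm a) (φ.symm b)]; simp) c hc⟩
  · rintro ⟨c, hc⟩
    exact ⟨c ∘ φ, isEDColoring_comp G G' φ hφ c hc⟩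

/-- model of the line graph of the sunlet graph -/
def sunletLine (t : ℕ) : SimpleGraph (ZMod t ⊕ ZMod t) :=
  SimpleGraph.fromRel (fun x y =>
    ∃ i : ZMod t, x = Sum.inl i ∧ (y = Sum.inl (i + 1) ∨ y = Sum.inr i ∨ y = Sum.inr (i + 1)))

lemma sunletLine_adj_ll {t : ℕ} {i j : ZMod t} :
    (sunletLine t).Adj (Sum.inl i) (Sum.inl j) ↔ i ≠ j ∧ (j = i + 1 ∨ i = j + 1) := by
  simp [sunletLine, fromRel_adj]

lemma sunletLine_adj_lr {t : ℕ} {i j : ZMod t} :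
    (sunletLine t).Adj (Sum.inl i) (Sum.inr j) ↔ j = i ∨ j = i + 1 := by
  simp [sunletLine, fromRel_adj]

lemma sunletLine_adj_rl {t : ℕ} {i j : ZMod t} :
    (sunletLine t).Adj (Sum.inr i) (Sum.inl j) ↔ i = j ∨ i = j + 1 := by
  rw [adj_comm, sunletLine_adj_lr]

lemma sunletLine_adj_rr {t : ℕ} {i j : ZMod t} :
    ¬ (sunletLine t).Adj (Sum.inr i) (Sum.inr j) := by
  simp [sunletLine, fromRel_adj]

lemma sunlet_adj_ll {t : ℕ} {i j : ZMod t} :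
    (sunlet t).Adj (Sum.inl i) (Sum.inl j) ↔ i ≠ j ∧ (j = i + 1 ∨ i = j + 1) := by
  simp [sunlet, fromRel_adj]

lemma sunlet_adj_lr {t : ℕ} {i j : ZMod t} :
    (sunlet t).Adj (Sum.inl i) (Sum.inr j) ↔ j = i := by
  simp [sunlet, fromRel_adj]

lemma sunlet_adj_rr {t : ℕ} {i j : ZMod t} :
    ¬ (sunlet t).Adj (Sum.inr i) (Sum.inr j) := by
  simp [sunlet, fromRel_adj]



section iso
variable {t : ℕ}

lemma zmod_one_ne_zero (ht : 3 ≤ t) : (1 : ZMod t) ≠ 0 := by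
  haveI : NeZero t := ⟨by omega⟩
  intro h
  have := (ZMod.natCast_eq_zero_iff 1 t).1 (by exact_mod_cast h)
  have := Nat.le_of_dvd (by omega) this
  omega

lemma zmod_two_ne_zero (ht : 3 ≤ t) : (2 : ZMod t) ≠ 0 := by
  haveI : NeZero t := ⟨by omega⟩
  intro h
  have := (ZMod.natCast_eq_zero_iff 2 t).1 (by exact_mod_cast h)
  have := Nat.le_of_dvd (by omega) this
  omega

lemma zmod_ne_add_one (ht : 3 ≤ t) (i : ZMod t) : i ≠ i + 1 := by
  intro h
  have : (1 : ZMod t) = 0 := by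
    have := left_eq_add.mp h
    exact this
  exact zmod_one_ne_zero ht this

lemma zmod_ne_add_two (ht : 3 ≤ t) (i : ZMod t) : i ≠ i + 2 := by
  intro h
  exact zmod_two_ne_zero ht (left_eq_add.mp h)

lemma mem_edge_cyc (ht : 3 ≤ t) (i : ZMod t) :
    s(Sum.inl i, Sum.inl (i + 1)) ∈ (sunlet t).edgeSet := by
  rw [mem_edgeSet, sunlet_adj_ll]
  exact ⟨by simpa using zmod_ne_add_one ht i, Or.inl rfl⟩

lemma mem_edge_spk (i : ZMod t) :
    s((Sum.inl i : ZMod t ⊕ ZMod t), Sum.inr i) ∈ (sunlet t).edgeSet := by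
  rw [mem_edgeSet, sunlet_adj_lr]

noncomputable def phi (ht : 3 ≤ t) : (ZMod t ⊕ ZMod t) ≃ (sunlet t).edgeSet :=
  Equiv.ofBijective (Sum.elim (fun i => ⟨s(Sum.inl i, Sum.inl (i + 1)), mem_edge_cyc ht i⟩)
      (fun i => ⟨s(Sum.inl i, Sum.inr i), mem_edge_spk i⟩)) (by
    constructor
    · rintro (i | i) (j | j) h <;> simp only [Sum.elim_inl, Sum.elim_inr, Subtype.mk.injEq,
        Sym2.eq_iff, Sum.inl.injEq, Sum.inr.injEq] at h
      · rcases h with ⟨rfl, -⟩ | ⟨h1, h2⟩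
        · rfl
        · exfalso; apply zmod_ne_add_two ht i
          linear_combination h1 - h2
      · simp at h
      · simp at h
      · rcases h with ⟨rfl, -⟩ | ⟨h1, -⟩
        · rfl
        · exact absurd h1 (by simp)
    · rintro ⟨E, hE⟩
      induction E using Sym2.ind with
      | _ x y =>
        rw [mem_edgeSet] at hE
        rcases x with i | i <;> rcases y with j | j
        · rw [sunlet_adj_ll] at hE
          rcases hE with ⟨hne, rfl | rfl⟩
          · exact ⟨Sum.inl i, rfl⟩
          · exact ⟨Sum.inl j, Subtype.ext (Sym2.eq_swap)⟩
        · rw [sunlet_adj_lr] at hE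
          subst hE
          exact ⟨Sum.inr j, rfl⟩
        · rw [(sunlet t).adj_comm, sunlet_adj_lr] at hE
          subst hE
          exact ⟨Sum.inr i, Subtype.ext Sym2.eq_swap⟩
        · exact absurd hE (sunlet_adj_rr))

lemma phi_adj (ht : 3 ≤ t) (a b : ZMod t ⊕ ZMod t) :
    (sunletLine t).Adj a b ↔ (sunlet t).lineGraph.Adj (phi ht a) (phi ht b) := by
  have hinj := (phi ht).injective
  rw [lineGraph_adj_iff_exists]
  have hne : phi ht a ≠ phi ht b ↔ a ≠ b := by
    constructor
    · intro h hab; exact h (congrArg _ hab)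
    · intro h hab; exact h (hinj hab)
  rw [hne]
  have hval : ∀ x, ((phi ht x : (sunlet t).edgeSet) : Sym2 (ZMod t ⊕ ZMod t)) =
      Sum.elim (fun i => s((Sum.inl i : ZMod t ⊕ ZMod t), Sum.inl (i+1)))
        (fun i => s((Sum.inl i : ZMod t ⊕ ZMod t), Sum.inr i)) x := by
    rintro (i | i) <;> rfl
  rw [hval a, hval b]
  rcases a with i | i <;> rcases b with j | j
  · rw [sunletLine_adj_ll]
    simp only [Sum.elim_inl, Sym2.mem_iff]
    constructor
    · rintro ⟨hne', h | h⟩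
      · exact ⟨by simpa using hne', Sum.inl j, Or.inr (by rw [h]), Or.inl rfl⟩
      · exact ⟨by simpa using hne', Sum.inl i, Or.inl rfl, Or.inr (by rw [h])⟩
    · rintro ⟨hne', v, hv1, hv2⟩
      refine ⟨by simpa using hne', ?_⟩
      rcases hv1 with rfl | rfl
      · rcases hv2 with h | h
        · exact absurd h hne'
        · exact Or.inr (Sum.inl.inj h)
      · rcases hv2 with h | h
        · exact Or.inl (Sum.inl.inj h).symm
        · exact absurd (by rw [add_right_cancel (Sum.inl.inj h)]) hne'
  · rw [sunletLine_adj_lr]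
    simp only [Sum.elim_inl, Sum.elim_inr, Sym2.mem_iff]
    constructor
    · rintro (h | h)
      · exact ⟨by simp, Sum.inl i, Or.inl rfl, Or.inl (by rw [h])⟩
      · exact ⟨by simp, Sum.inl (i+1), Or.inr rfl, Or.inl (by rw [h])⟩
    · rintro ⟨-, v, hv1, hv2⟩
      rcases hv2 with rfl | rfl
      · rcases hv1 with h | h
        · exact Or.inl (Sum.inl.inj h)
        · exact Or.inr (Sum.inl.inj h)
      · rcases hv1 with h | h <;> simp at h
  · rw [(sunletLine t).adj_comm, sunletLine_adj_lr]
    simp only [Sum.elim_inl, Sum.elim_inr, Sym2.mem_iff]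
    constructor
    · rintro (h | h)
      · exact ⟨by simp, Sum.inl i, Or.inl rfl, Or.inl (by rw [h])⟩
      · exact ⟨by simp, Sum.inl i, Or.inl rfl, Or.inr (by rw [h])⟩
    · rintro ⟨-, v, hv1, hv2⟩
      rcases hv1 with rfl | rfl
      · rcases hv2 with h | h
        · exact Or.inl (Sum.inl.inj h)
        · exact Or.inr (Sum.inl.inj h)
      · rcases hv2 with h | h <;> simp at h
  · simp only [Sum.elim_inr, Sym2.mem_iff]
    constructor
    · intro h; exact absurd h (sunletLine_adj_rr)
    · rintro ⟨hne', v, hv1, hv2⟩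
      exfalso
      rcases hv1 with rfl | rfl <;> rcases hv2 with h | h
      · exact hne' (by rw [Sum.inl.inj h])
      · simp at h
      · simp at h
      · exact hne' h
end iso

lemma zmod_sub_one_ne {t : ℕ} (ht : 3 ≤ t) (m : ZMod t) : m ≠ m - 1 := by
  intro h
  apply zmod_one_ne_zero ht
  linear_combination h

lemma sunletLine_lower {t n : ℕ} (ht : 3 ≤ t) (c : ZMod t ⊕ ZMod t → Fin n)
    (hc : IsEDColoring (sunletLine t) c) : t + (t + 3) / 4 ≤ n := by
  haveI : NeZero t := ⟨by omega⟩
  obtain ⟨h1, h2, h3⟩ := hc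
  have hcardW : Fintype.card (ZMod t ⊕ ZMod t) = 2 * t := by
    simp [ZMod.card]; ring
  have ncard_eq : ∀ j : Fin n, {u | c u = j}.ncard
      = (Finset.univ.filter (fun u => c u = j)).card := by
    intro j
    simp [Set.ncard_eq_toFinset_card', Set.toFinset_setOf]
  by_cases hemp : ∃ i : Fin n, {u | c u = i} = ∅
  · obtain ⟨i0, hi0⟩ := hemp
    have hinj : Function.Injective c := by
      intro u v huv
      by_contra hne
      have hlt : 1 < {w | c w = c v}.ncard :=
        (Set.one_lt_ncard_iff (Set.toFinite _)).2 ⟨u, v, huv, rfl, hne⟩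
      have := h3 (c v) i0
      rw [hi0] at this
      rw [Set.ncard_empty] at this
      omega
    have := Fintype.card_le_of_injective c hinj
    rw [hcardW, Fintype.card_fin] at this
    omega
  · push_neg at hemp
    -- singleton classes dominated by the spokes
    have key : ∀ m : ZMod t, ∃ (j : Fin n) (x : ZMod t ⊕ ZMod t),
        (∀ u, c u = j ↔ u = x) ∧
        (x = Sum.inr m ∨ x = Sum.inl m ∨ x = Sum.inl (m - 1)) := by
      intro m
      obtain ⟨j, ⟨u₀, hu₀⟩, hdom⟩ := h2 (Sum.inr m)
      have hmem : ∀ u, c u = j → u = Sum.inr m ∨ u = Sum.inl m ∨ u = Sum.inl (m - 1) := by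
        intro u hu
        rcases hdom u hu with rfl | hadj
        · exact Or.inl rfl
        · rcases u with a | a
          · rw [sunletLine_adj_rl] at hadj
            rcases hadj with rfl | h
            · exact Or.inr (Or.inl rfl)
            · exact Or.inr (Or.inr (by rw [eq_sub_of_add_eq h.symm]))
          · exact absurd hadj sunletLine_adj_rr
      have hadjs : ∀ u v, (u = Sum.inr m ∨ u = Sum.inl m ∨ u = Sum.inl (m - 1)) →
          (v = Sum.inr m ∨ v = Sum.inl m ∨ v = Sum.inl (m - 1)) → u ≠ v →
          (sunletLine t).Adj u v := by
        rintro u v (rfl | rfl | rfl) (rfl | rfl | rfl) hne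
        · exact absurd rfl hne
        · exact (sunletLine_adj_rl).2 (Or.inl rfl)
        · exact (sunletLine_adj_rl).2 (Or.inr (by rw [sub_add_cancel]))
        · exact (sunletLine_adj_lr).2 (Or.inl rfl)
        · exact absurd rfl hne
        · exact (sunletLine_adj_ll).2 ⟨(zmod_sub_one_ne ht m), Or.inr (by rw [sub_add_cancel])⟩
        · exact (sunletLine_adj_lr).2 (Or.inr (by rw [sub_add_cancel]))
        · exact (sunletLine_adj_ll).2 ⟨Ne.symm (zmod_sub_one_ne ht m),
            Or.inl (by rw [sub_add_cancel])⟩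
        · exact absurd rfl hne
      have huniq : ∀ u v, c u = j → c v = j → u = v := by
        intro u v hu hv
        by_contra hne
        exact h1 (hadjs u v (hmem u hu) (hmem v hv) hne) (hu.trans hv.symm)
      exact ⟨j, u₀, fun u => ⟨fun hu => huniq u u₀ hu hu₀, fun h => h ▸ hu₀⟩, hmem u₀ hu₀⟩
    choose J X hJX hX using key
    have hJcard : ∀ a : Fin n, (Finset.univ.filter (fun m : ZMod t => J m = a)).card ≤ 2 := by
      intro a
      by_contra hgt
      push_neg at hgt
      obtain ⟨m1, hm1, m2, hm2, m3, hm3, h12, h13, h23⟩ := Finset.two_lt_card.1 hgt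
      simp only [Finset.mem_filter, Finset.mem_univ, true_and] at hm1 hm2 hm3
      have hXeq : ∀ m m', J m = J m' → X m' = X m := by
        intro m m' h
        exact (hJX m (X m')).1 (((hJX m' (X m')).2 rfl).trans (h.symm ▸ rfl))
      have e2 : X m2 = X m1 := hXeq m1 m2 (hm1.trans hm2.symm)
      have e3 : X m3 = X m1 := hXeq m1 m3 (hm1.trans hm3.symm)
      have p1 := hX m1
      have p2 := hX m2; rw [e2] at p2
      have p3 := hX m3; rw [e3] at p3
      rcases hXm : X m1 with b | b <;> rw [hXm] at p1 p2 p3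
      · -- X m1 = inl b : each mi = b or b + 1
        have fit : ∀ m : ZMod t, ((Sum.inl b : ZMod t ⊕ ZMod t) = Sum.inr m ∨
            (Sum.inl b : ZMod t ⊕ ZMod t) = Sum.inl m ∨
            (Sum.inl b : ZMod t ⊕ ZMod t) = Sum.inl (m - 1)) → m = b ∨ m = b + 1 := by
          rintro m (h | h | h)
          · simp at h
          · exact Or.inl (Sum.inl.inj h).symm
          · exact Or.inr (by linear_combination - Sum.inl.inj h)
        rcases fit m1 p1 with rfl | rfl <;> rcases fit m2 p2 with h2' | h2' <;>
          rcases fit m3 p3 with h3' | h3' <;> simp_all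
      · have fit : ∀ m : ZMod t, (Sum.inr b = (Sum.inr m : ZMod t ⊕ ZMod t) ∨
            Sum.inr b = Sum.inl m ∨ Sum.inr b = Sum.inl (m - 1)) → m = b := by
          rintro m (h | h | h)
          · exact (Sum.inr.inj h).symm
          · simp at h
          · simp at h
        rw [fit m1 p1, fit m2 p2] at h12
        exact h12 rfl
    have htle : t ≤ 2 * (Finset.univ.image J).card := by
      have := Finset.card_le_mul_card_image (f := J) Finset.univ 2
        (fun b _ => hJcard b)
      simpa [ZMod.card] using this
    have hfib1 : ∀ a ∈ Finset.univ.image J,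
        (Finset.univ.filter (fun u => c u = a)).card = 1 := by
      intro a ha
      simp only [Finset.mem_image, Finset.mem_univ, true_and] at ha
      obtain ⟨m, rfl⟩ := ha
      rw [Finset.card_eq_one]
      refine ⟨X m, ?_⟩
      ext u
      simp [hJX m u]
    have hmem0 : J 0 ∈ Finset.univ.image J := Finset.mem_image_of_mem J (Finset.mem_univ 0)
    have hfib2 : ∀ a : Fin n, (Finset.univ.filter (fun u => c u = a)).card ≤ 2 := by
      intro a
      have := h3 a (J 0)
      rw [ncard_eq, ncard_eq, hfib1 (J 0) hmem0] at this
      omega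
    have hsum : ∑ a : Fin n, (Finset.univ.filter (fun u => c u = a)).card = 2 * t := by
      rw [← Finset.card_eq_sum_card_fiberwise (fun x _ => Finset.mem_univ (c x))]
      simpa using hcardW
    set S := Finset.univ.image J with hSdef
    have hScard : S.card ≤ n := le_trans (Finset.card_le_univ S) (by simp)
    have hsplit : ∑ a ∈ Finset.univ \ S, (Finset.univ.filter (fun u => c u = a)).card
        + ∑ a ∈ S, (Finset.univ.filter (fun u => c u = a)).card = 2 * t := by
      rw [Finset.sum_sdiff (Finset.subset_univ S)]; exact hsum
    have hs1 : ∑ a ∈ S, (Finset.univ.filter (fun u => c u = a)).card = S.card := by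
      rw [Finset.sum_congr rfl hfib1]; simp
    have hs2 : ∑ a ∈ Finset.univ \ S, (Finset.univ.filter (fun u => c u = a)).card
        ≤ (n - S.card) * 2 := by
      have := Finset.sum_le_card_nsmul (Finset.univ \ S)
        (fun a => (Finset.univ.filter (fun u => c u = a)).card) 2
        (fun a _ => hfib2 a)
      rwa [smul_eq_mul, Finset.card_sdiff_of_subset (Finset.subset_univ S), Finset.card_univ,
        Fintype.card_fin] at this
    omega

def qq (t : ℕ) : ℕ := (t+3)/4
def exr (t : ℕ) : ℕ := 2 * qq t - (t+1)/2
def lo (t : ℕ) : ℕ := (t - exr t) % 2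
def pss (t : ℕ) : ℕ := (t - exr t - lo t) / 2
def ca (t : ℕ) : ℕ := 2 * qq t + pss t
def fe (t m : ℕ) : ℕ :=
  if m % 2 = 0 then m / 2
  else if m = 1 ∧ lo t = 1 then ca t
  else ca t + lo t + (m - (1 + 2 * lo t)) / 4
def gs (t m : ℕ) : ℕ :=
  if m = 0 ∧ exr t = 1 then 2 * qq t - 1
  else if m = t - 1 ∧ lo t = 1 then ca t
  else 2 * qq t + (m - exr t) / 2

section lems
variable {t m m' k : ℕ}

lemma fe_lt (ht : 4 ≤ t) (hm : m < t) : fe t m < t + qq t := by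
  unfold fe ca pss lo exr qq; split_ifs <;> omega

lemma gs_lt (ht : 4 ≤ t) (hm : m < t) : gs t m < t + qq t := by
  unfold gs ca pss lo exr qq; split_ifs <;> omega

lemma L3 (ht : 4 ≤ t) (hm : m < t) (hm' : m' < t)
    (h : m' = m + 1 ∨ (m = t - 1 ∧ m' = 0)) : fe t m ≠ fe t m' := by
  unfold fe ca pss lo exr qq; split_ifs <;> omega

lemma L4 (ht : 4 ≤ t) (hm : m < t) (hm' : m' < t) (h : fe t m = gs t m') :
    m = 1 ∧ m' = t - 1 := by
  unfold fe gs ca pss lo exr qq at h; split_ifs at h <;> omega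

lemma L5 (ht : 4 ≤ t) (hm : m < t) (hm' : m' < t) (h : fe t m = fe t m') :
    m = m' ∨ (m % 2 = 1 ∧ m' % 2 = 1 ∧ (m = m' + 2 ∨ m' = m + 2)) := by
  unfold fe ca pss lo exr qq at h; split_ifs at h <;> omega

lemma L6 (ht : 4 ≤ t) (hm : m < t) (hm' : m' < t) (h : gs t m = gs t m') :
    m = m' ∨ (exr t ≤ m ∧ exr t ≤ m' ∧ (m - exr t) / 2 = (m' - exr t) / 2) := by
  unfold gs ca pss lo exr qq at h; unfold exr qq; split_ifs at h <;> omega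

lemma L7 (ht : 4 ≤ t) (hm : m < t) (he : m % 2 = 0) (hm' : m' < t)
    (h : fe t m' = m / 2) : m' = m := by
  unfold fe ca pss lo exr qq at h; split_ifs at h <;> omega

lemma L8 (ht : 4 ≤ t) (hm : m < t) (he : m % 2 = 0) (hm' : m' < t) :
    gs t m' ≠ m / 2 := by
  unfold gs ca pss lo exr qq; split_ifs <;> omega

lemma L9 (ht : 4 ≤ t) (hk : k < t + qq t) :
    (∃ m, m < t ∧ fe t m = k) ∨ (∃ m, m < t ∧ gs t m = k) := by
  by_cases h1 : k < (t+1)/2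
  · exact Or.inl ⟨2*k, by unfold fe qq at *; split_ifs <;> omega⟩
  by_cases h2 : k = 2 * qq t - 1 ∧ exr t = 1
  · exact Or.inr ⟨0, by unfold gs ca pss lo exr qq at *; split_ifs <;> omega⟩
  by_cases h3 : 2 * qq t ≤ k ∧ k < ca t
  · exact Or.inr ⟨exr t + 2 * (k - 2 * qq t), by
      unfold gs ca pss lo exr qq at *; split_ifs <;> omega⟩
  by_cases h4 : k = ca t ∧ lo t = 1
  · exact Or.inr ⟨t - 1, by unfold gs ca pss lo exr qq at *; split_ifs <;> omega⟩
  · exact Or.inl ⟨1 + 2 * lo t + 4 * (k - (ca t + lo t)), by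
      unfold fe ca pss lo exr qq at *; split_ifs <;> omega⟩
end lems


lemma fe_even {t m : ℕ} (he : m % 2 = 0) : fe t m = m / 2 := by
  unfold fe; rw [if_pos he]

noncomputable def colf (t : ℕ) (ht : 4 ≤ t) : ZMod t ⊕ ZMod t → Fin (t + qq t) :=
  haveI : NeZero t := ⟨by omega⟩
  Sum.elim (fun i => ⟨fe t i.val, fe_lt ht i.val_lt⟩)
    (fun i => ⟨gs t i.val, gs_lt ht i.val_lt⟩)

lemma upper_main (t : ℕ) (ht : 4 ≤ t) : IsEDColoring (sunletLine t) (colf t ht) := by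
  haveI : NeZero t := ⟨by omega⟩
  haveI : Fact (1 < t) := ⟨by omega⟩
  have hsucc : ∀ i : ZMod t, (i + 1).val = i.val + 1 ∨ (i.val = t - 1 ∧ (i + 1).val = 0) := by
    intro i
    have h := ZMod.val_add i 1
    rw [ZMod.val_one] at h
    have hlt := ZMod.val_lt i
    rcases Nat.lt_or_ge (i.val + 1) t with h' | h'
    · left; rw [h, Nat.mod_eq_of_lt h']
    · right
      have : i.val + 1 = t := by omega
      constructor
      · omega
      · rw [h, this, Nat.mod_self]
  have hvalinj : ∀ a b : ZMod t, a.val = b.val → a = b := fun a b h => ZMod.val_injective t h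
  have hcastval : ∀ m : ℕ, m < t → ((m : ZMod t)).val = m := fun m hm => ZMod.val_cast_of_lt hm
  refine ⟨?_, ?_, ?_⟩
  · -- proper
    rintro (i | i) (j | j) hadj heq
    · rw [sunletLine_adj_ll] at hadj
      obtain ⟨hne, hor⟩ := hadj
      simp only [colf, Sum.elim_inl, Fin.mk.injEq] at heq
      rcases hor with rfl | rfl
      · rcases hsucc i with h | ⟨h1, h2⟩
        · exact L3 ht i.val_lt (i+1).val_lt (Or.inl h) heq
        · exact L3 ht i.val_lt (i+1).val_lt (Or.inr ⟨h1, h2⟩) heq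
      · rcases hsucc j with h | ⟨h1, h2⟩
        · exact L3 ht j.val_lt (j+1).val_lt (Or.inl h) heq.symm
        · exact L3 ht j.val_lt (j+1).val_lt (Or.inr ⟨h1, h2⟩) heq.symm
    · rw [sunletLine_adj_lr] at hadj
      simp only [colf, Sum.elim_inl, Sum.elim_inr, Fin.mk.injEq] at heq
      obtain ⟨e1, e2⟩ := L4 ht i.val_lt j.val_lt heq
      rcases hadj with rfl | rfl
      · omega
      · rcases hsucc i with h | ⟨h1, h2⟩ <;> omega
    · rw [sunletLine_adj_rl] at hadj
      simp only [colf, Sum.elim_inl, Sum.elim_inr, Fin.mk.injEq] at heq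
      obtain ⟨e1, e2⟩ := L4 ht j.val_lt i.val_lt heq.symm
      rcases hadj with rfl | rfl
      · omega
      · rcases hsucc j with h | ⟨h1, h2⟩ <;> omega
    · exact sunletLine_adj_rr hadj
  · -- domination
    have uniq : ∀ m₀ : ℕ, (hm₀ : m₀ < t) → m₀ % 2 = 0 →
        ∀ u, colf t ht u = ⟨fe t m₀, fe_lt ht hm₀⟩ → u = Sum.inl ((m₀ : ℕ) : ZMod t) := by
      intro m₀ hm₀ hev u hu
      rcases u with a | a
      · simp only [colf, Sum.elim_inl, Fin.mk.injEq] at hu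
        rw [fe_even hev] at hu
        have hv := L7 ht hm₀ hev a.val_lt hu
        have : a = ((m₀ : ℕ) : ZMod t) := hvalinj _ _ (by rw [hcastval m₀ hm₀]; exact hv)
        rw [this]
      · simp only [colf, Sum.elim_inr, Fin.mk.injEq] at hu
        rw [fe_even hev] at hu
        exact absurd hu (L8 ht hm₀ hev a.val_lt)
    have hvalcol : ∀ m₀ : ℕ, (hm₀ : m₀ < t) →
        colf t ht (Sum.inl ((m₀ : ℕ) : ZMod t)) = ⟨fe t m₀, fe_lt ht (by omega)⟩ := by
      intro m₀ hm₀
      simp only [colf, Sum.elim_inl, Fin.mk.injEq]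
      rw [hcastval m₀ hm₀]
    rintro (i | i)
    · set m := i.val with hm
      have hmt : m < t := i.val_lt
      by_cases he : m % 2 = 0
      · refine ⟨⟨fe t m, fe_lt ht hmt⟩, ⟨Sum.inl i, rfl⟩, fun u hu => ?_⟩
        left
        rw [uniq m hmt he u hu]
        congr 1
        exact (ZMod.natCast_zmod_val i)
      · refine ⟨⟨fe t (m-1), fe_lt ht (by omega)⟩, ⟨Sum.inl (((m-1 : ℕ) : ZMod t)),
          hvalcol (m-1) (by omega)⟩, fun u hu => ?_⟩
        right
        rw [uniq (m-1) (by omega) (by omega) u hu]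
        rw [sunletLine_adj_ll]
        constructor
        · intro hcon
          have := congrArg ZMod.val hcon
          rw [hcastval (m-1) (by omega)] at this
          omega
        · right
          have : ((m - 1 : ℕ) : ZMod t) + 1 = ((m : ℕ) : ZMod t) := by
            have : ((m - 1 : ℕ) : ZMod t) + 1 = (((m - 1) + 1 : ℕ) : ZMod t) := by push_cast; ring
            rw [this]
            congr 1
            omega
          rw [this, ZMod.natCast_zmod_val i]
    · set m := i.val with hm
      have hmt : m < t := i.val_lt
      set m₀ := m - m % 2 with hm₀def
      have hm₀t : m₀ < t := by omega
      have hm₀e : m₀ % 2 = 0 := by omega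
      refine ⟨⟨fe t m₀, fe_lt ht hm₀t⟩, ⟨Sum.inl (((m₀ : ℕ) : ZMod t)),
        hvalcol m₀ hm₀t⟩, fun u hu => ?_⟩
      right
      rw [uniq m₀ hm₀t hm₀e u hu]
      rw [sunletLine_adj_rl]
      by_cases he : m % 2 = 0
      · left
        apply hvalinj
        rw [hcastval m₀ hm₀t]
        omega
      · right
        have h1 : ((m₀ : ℕ) : ZMod t) + 1 = ((m₀ + 1 : ℕ) : ZMod t) := by push_cast; ring
        have h2 : m₀ + 1 = m := by omega
        rw [h1, h2, ZMod.natCast_zmod_val i]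
  · -- equitable
    have trio : ∀ u v w, colf t ht u = colf t ht v → colf t ht u = colf t ht w →
        u = v ∨ u = w ∨ v = w := by
      rintro (a | a) (b | b) (c | c) h1 h2 <;>
        simp only [colf, Sum.elim_inl, Sum.elim_inr, Fin.mk.injEq] at h1 h2
      · have e1 := L5 ht a.val_lt b.val_lt h1
        have e2 := L5 ht a.val_lt c.val_lt h2
        have e3 := L5 ht b.val_lt c.val_lt (h1.symm.trans h2)
        have : a.val = b.val ∨ a.val = c.val ∨ b.val = c.val := by omega
        rcases this with h | h | h
        · exact Or.inl (congrArg _ (hvalinj _ _ h))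
        · exact Or.inr (Or.inl (congrArg _ (hvalinj _ _ h)))
        · exact Or.inr (Or.inr (congrArg _ (hvalinj _ _ h)))
      · obtain ⟨e1, -⟩ := L4 ht a.val_lt c.val_lt h2
        obtain ⟨e2, -⟩ := L4 ht b.val_lt c.val_lt (h1.symm.trans h2)
        exact Or.inl (congrArg _ (hvalinj _ _ (e1.trans e2.symm)))
      · obtain ⟨e1, -⟩ := L4 ht a.val_lt b.val_lt h1
        obtain ⟨e2, -⟩ := L4 ht c.val_lt b.val_lt (h2.symm.trans h1)
        exact Or.inr (Or.inl (congrArg _ (hvalinj _ _ (e1.trans e2.symm))))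
      · obtain ⟨-, e1⟩ := L4 ht a.val_lt b.val_lt h1
        obtain ⟨-, e2⟩ := L4 ht a.val_lt c.val_lt h2
        exact Or.inr (Or.inr (congrArg _ (hvalinj _ _ (e1.trans e2.symm))))
      · obtain ⟨e1, -⟩ := L4 ht b.val_lt a.val_lt h1.symm
        obtain ⟨e2, -⟩ := L4 ht c.val_lt a.val_lt h2.symm
        exact Or.inr (Or.inr (congrArg _ (hvalinj _ _ (e1.trans e2.symm))))
      · obtain ⟨-, e1⟩ := L4 ht b.val_lt a.val_lt h1.symm
        obtain ⟨-, e2⟩ := L4 ht b.val_lt c.val_lt (h1.symm.trans h2)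
        exact Or.inr (Or.inl (congrArg _ (hvalinj _ _ (e1.trans e2.symm))))
      · obtain ⟨-, e1⟩ := L4 ht c.val_lt a.val_lt h2.symm
        obtain ⟨-, e2⟩ := L4 ht c.val_lt b.val_lt (h2.symm.trans h1)
        exact Or.inl (congrArg _ (hvalinj _ _ (e1.trans e2.symm)))
      · obtain e1 := L6 ht a.val_lt b.val_lt h1
        obtain e2 := L6 ht a.val_lt c.val_lt h2
        obtain e3 := L6 ht b.val_lt c.val_lt (h1.symm.trans h2)
        have : a.val = b.val ∨ a.val = c.val ∨ b.val = c.val := by omega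
        rcases this with h | h | h
        · exact Or.inl (congrArg _ (hvalinj _ _ h))
        · exact Or.inr (Or.inl (congrArg _ (hvalinj _ _ h)))
        · exact Or.inr (Or.inr (congrArg _ (hvalinj _ _ h)))
    have hnon : ∀ b : Fin (t + qq t), {u | colf t ht u = b}.Nonempty := by
      intro b
      rcases L9 ht b.isLt with ⟨m, hm, hfe⟩ | ⟨m, hm, hgs⟩
      · refine ⟨Sum.inl ((m : ℕ) : ZMod t), ?_⟩
        show colf t ht _ = b
        apply Fin.ext
        show fe t (ZMod.val _) = b.val
        rw [hcastval m hm]; exact hfe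
      · refine ⟨Sum.inr ((m : ℕ) : ZMod t), ?_⟩
        show colf t ht _ = b
        apply Fin.ext
        show gs t (ZMod.val _) = b.val
        rw [hcastval m hm]; exact hgs
    have hle2 : ∀ a : Fin (t + qq t), {u | colf t ht u = a}.ncard ≤ 2 := by
      intro a
      by_contra hgt
      push_neg at hgt
      obtain ⟨u, v, w, hu, hv, hw, huv, huw, hvw⟩ :=
        (Set.two_lt_ncard_iff (Set.toFinite _)).1 hgt
      rcases trio u v w (hu.trans hv.symm) (hu.trans hw.symm) with h | h | h <;> contradiction
    intro a b
    have h1 := hle2 a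
    have h2 := (Set.ncard_pos (Set.toFinite _)).2 (hnon b)
    omega


def c3 : ZMod 3 ⊕ ZMod 3 → Fin 4 :=
  Sum.elim (fun i => if i = 0 then 0 else if i = 1 then 2 else 1)
    (fun i => if i = 0 then 2 else 3)

instance : DecidableRel (sunletLine 3).Adj := fun a b =>
  decidable_of_iff _ (SimpleGraph.fromRel_adj _ a b).symm

lemma t3_upper : IsEDColoring (sunletLine 3) c3 := by
  refine ⟨by decide, by decide, ?_⟩
  have hh : ∀ j : Fin 4, {u | c3 u = j}.ncard
      = (Finset.univ.filter (fun u => c3 u = j)).card := by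
    intro j; simp [Set.ncard_eq_toFinset_card', Set.toFinset_setOf]
  intro i j
  rw [hh i, hh j]
  revert i j
  decide

lemma upper_exists (t : ℕ) (ht : 3 ≤ t) :
    ∃ c : ZMod t ⊕ ZMod t → Fin (t + (t + 3) / 4), IsEDColoring (sunletLine t) c := by
  rcases Nat.lt_or_ge t 4 with h4 | h4
  · have h3 : t = 3 := by omega
    subst h3
    exact ⟨c3, t3_upper⟩
  · exact ⟨colf t h4, upper_main t h4⟩


theorem edcn_lineGraph_sunlet (t : ℕ) (ht : 3 ≤ t) :
    edcn (sunlet t).lineGraph = t + (t + 3) / 4 := by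
  have hiso := edcn_eq_of_iso (sunletLine t) ((sunlet t).lineGraph) (phi ht) (phi_adj ht)
  rw [← hiso]
  apply le_antisymm
  · exact Nat.sInf_le (upper_exists t ht)
  · exact le_csInf ⟨t + (t + 3) / 4, upper_exists t ht⟩
      (fun n hn => by obtain ⟨c, hc⟩ := hn; exact sunletLine_lower ht c hc)
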